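/- arXiv:2509.16359 — 3 statements merged into one kernel-verified Lean document; each statement's English description precedes it below -/
import Mathlib

section
/- Fix c > 0 and suppose that (w_r · P̂[t])² ≤ c for every rank r = 1,…,R and every time t = 1,…,τ. Set A = c. Then the per-sample universal loss is bounded by the per-sample loss of the best fixed-rank filter plus a vanishing residual: (1/τ) L_u(τ) ≤ (1/τ) min_{1 ≤ r ≤ R} ℓ_r(τ) + (2A/τ) · ln R. -/
/-- Euclidean inner product on `ℝ^R`. -/
noncomputable def dotp {R : ℕ} (w v : Fin R → ℝ) : ℝ := ∑ i, w i * v i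

/-- Cumulative loss `ℓ_r(t) = Σ_{t'=1}^{t} (w_r · P̂[t'])²` (so `ℓ_r(0) = 0`). -/
noncomputable def cumLoss {R : ℕ} (w : Fin R → Fin R → ℝ) (P : ℕ → Fin R → ℝ)
    (r : Fin R) (t : ℕ) : ℝ :=
  ∑ t' ∈ Finset.Icc 1 t, (dotp (w r) (P t')) ^ 2

/-- Blending weights `μ_r(t) = exp(−ℓ_r(t−1)/(2c)) / Σ_k exp(−ℓ_k(t−1)/(2c))`. -/
noncomputable def blendWeight {R : ℕ} (c : ℝ) (w : Fin R → Fin R → ℝ)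
    (P : ℕ → Fin R → ℝ) (r : Fin R) (t : ℕ) : ℝ :=
  Real.exp (-cumLoss w P r (t - 1) / (2 * c)) /
    ∑ k, Real.exp (-cumLoss w P k (t - 1) / (2 * c))

/-- Universal weight vector `w_u[t] = Σ_r μ_r(t) w_r`. -/
noncomputable def univWeight {R : ℕ} (c : ℝ) (w : Fin R → Fin R → ℝ)
    (P : ℕ → Fin R → ℝ) (t : ℕ) : Fin R → ℝ :=
  ∑ r, blendWeight c w P r t • w r

/-- Universal cumulative loss `L_u(τ) = Σ_{t=1}^{τ} (w_u[t] · P̂[t])²`. -/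
noncomputable def univLoss {R : ℕ} (c : ℝ) (w : Fin R → Fin R → ℝ)
    (P : ℕ → Fin R → ℝ) (τ : ℕ) : ℝ :=
  ∑ t ∈ Finset.Icc 1 τ, (dotp (univWeight c w P t) (P t)) ^ 2

/-- The Gaussian-type map `x ↦ exp(−x²/(2c))` is concave on `[-√c, √c]`. -/
lemma gauss_concave {c : ℝ} (hc : 0 < c) :
    ConcaveOn ℝ (Set.Icc (-Real.sqrt c) (Real.sqrt c))
      (fun x : ℝ => Real.exp (-x ^ 2 / (2 * c))) := by
  have hu : ∀ x : ℝ, HasDerivAt (fun x : ℝ => -x ^ 2 / (2 * c)) (-x / c) x := by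
    intro x
    have h := ((hasDerivAt_pow 2 x).neg.div_const (2 * c))
    refine h.congr_deriv ?_
    field_simp
    ring
  apply concaveOn_of_hasDerivWithinAt2_nonpos
    (f' := fun x => Real.exp (-x ^ 2 / (2 * c)) * (-x / c))
    (f'' := fun x => Real.exp (-x ^ 2 / (2 * c)) * ((x ^ 2 - c) / c ^ 2))
    (convex_Icc _ _)
  · exact Continuous.continuousOn (by continuity)
  · intro x _
    exact ((hu x).exp).hasDerivWithinAt
  · intro x _
    have h2 : HasDerivAt (fun x : ℝ => Real.exp (-x ^ 2 / (2 * c)) * (-x / c))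
        (Real.exp (-x ^ 2 / (2 * c)) * (-x / c) * (-x / c)
          + Real.exp (-x ^ 2 / (2 * c)) * (-1 / c)) x :=
      ((hu x).exp).mul (((hasDerivAt_id x).neg).div_const c)
    have heq : Real.exp (-x ^ 2 / (2 * c)) * (-x / c) * (-x / c)
          + Real.exp (-x ^ 2 / (2 * c)) * (-1 / c)
        = Real.exp (-x ^ 2 / (2 * c)) * ((x ^ 2 - c) / c ^ 2) := by
      field_simp
      ring
    exact (heq ▸ h2).hasDerivWithinAt
  · intro x hx
    rw [interior_Icc] at hx
    have hxc : x ^ 2 ≤ c := by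
      have h1 : |x| < Real.sqrt c := abs_lt.2 ⟨hx.1, hx.2⟩
      calc x ^ 2 = |x| ^ 2 := (sq_abs x).symm
        _ ≤ Real.sqrt c ^ 2 := pow_le_pow_left₀ (abs_nonneg x) h1.le 2
        _ = c := Real.sq_sqrt hc.le
    have hdiv : (x ^ 2 - c) / c ^ 2 ≤ 0 :=
      div_nonpos_of_nonpos_of_nonneg (by linarith) (by positivity)
    exact mul_nonpos_of_nonneg_of_nonpos (Real.exp_pos _).le hdiv

/-- Jensen step: a convex combination of `exp(−x_k²/(2c))` is at most
`exp(−(Σ μ_k x_k)²/(2c))` when all `x_k² ≤ c`. -/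
lemma mix_le {R : ℕ} {c : ℝ} (hc : 0 < c) (μ x : Fin R → ℝ)
    (hμ0 : ∀ k, 0 ≤ μ k) (hμ1 : ∑ k, μ k = 1) (hx : ∀ k, x k ^ 2 ≤ c) :
    ∑ k, μ k * Real.exp (-(x k) ^ 2 / (2 * c)) ≤
      Real.exp (-(∑ k, μ k * x k) ^ 2 / (2 * c)) := by
  have hmem : ∀ k ∈ Finset.univ, x k ∈ Set.Icc (-Real.sqrt c) (Real.sqrt c) := by
    intro k _
    have : |x k| ≤ Real.sqrt c := by
      rw [← Real.sqrt_sq_eq_abs]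
      exact Real.sqrt_le_sqrt (hx k)
    exact abs_le.mp this
  have h := (gauss_concave hc).le_map_sum (w := μ) (p := x)
    (fun k _ => hμ0 k) hμ1 hmem
  simpa [smul_eq_mul] using h

set_option maxHeartbeats 1000000 in
/-- Theorem 1 of the paper: with `A = c` bounding the squared filter outputs, the
per-sample universal loss is bounded by the per-sample loss of the best fixed-rank
filter plus the residual `(2A/τ) ln R`. -/
theorem universalOSF_regret_bound {R : ℕ} (hR : 1 ≤ R) (c : ℝ) (hc : 0 < c)
    (w : Fin R → Fin R → ℝ) (P : ℕ → Fin R → ℝ) (τ : ℕ) (hτ : 1 ≤ τ)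
    (hbound : ∀ r : Fin R, ∀ t ∈ Finset.Icc 1 τ, (dotp (w r) (P t)) ^ 2 ≤ c) :
    (1 / (τ : ℝ)) * univLoss c w P τ ≤
      (1 / (τ : ℝ)) * (⨅ r : Fin R, cumLoss w P r τ) + (2 * c / (τ : ℝ)) * Real.log R := by
  haveI : NeZero R := ⟨by omega⟩
  have h2c : (0 : ℝ) < 2 * c := by linarith
  -- the potential W n
  set W : ℕ → ℝ := fun n => ∑ k, Real.exp (-cumLoss w P k n / (2 * c)) with hW
  have hWpos : ∀ n, 0 < W n := fun n =>
    Finset.sum_pos (fun _ _ => Real.exp_pos _) Finset.univ_nonempty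
  have hcum0 : ∀ r : Fin R, cumLoss w P r 0 = 0 := by
    intro r; simp [cumLoss]
  have hIcc : ∀ n : ℕ, Finset.Icc 1 (n + 1) = insert (n + 1) (Finset.Icc 1 n) := by
    intro n; ext m; simp [Finset.mem_Icc]; omega
  have hcumsucc : ∀ (r : Fin R) (n : ℕ),
      cumLoss w P r (n + 1) = cumLoss w P r n + (dotp (w r) (P (n + 1))) ^ 2 := by
    intro r n
    rw [cumLoss, hIcc n, Finset.sum_insert (by simp [Finset.mem_Icc])]
    rw [cumLoss]; ring
  have huLsucc : ∀ n : ℕ,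
      univLoss c w P (n + 1)
        = univLoss c w P n + (dotp (univWeight c w P (n + 1)) (P (n + 1))) ^ 2 := by
    intro n
    rw [univLoss, hIcc n, Finset.sum_insert (by simp [Finset.mem_Icc])]
    rw [univLoss]; ring
  -- the key potential decrease
  have key : ∀ n, n ≤ τ → W n ≤ (R : ℝ) * Real.exp (-univLoss c w P n / (2 * c)) := by
    intro n
    induction n with
    | zero =>
      intro _
      simp [hW, hcum0, univLoss, Finset.card_univ]
    | succ n ih =>
      intro hn1
      have hn : n ≤ τ := by omega
      have hmemτ : n + 1 ∈ Finset.Icc 1 τ := by simp [Finset.mem_Icc]; omega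
      set x : Fin R → ℝ := fun k => dotp (w k) (P (n + 1)) with hx
      set μ : Fin R → ℝ := fun k => blendWeight c w P k (n + 1) with hμ
      have hμdef : ∀ k, μ k = Real.exp (-cumLoss w P k n / (2 * c)) / W n := by
        intro k; simp [hμ, blendWeight, hW]
      have hμ0 : ∀ k, 0 ≤ μ k := by
        intro k; rw [hμdef k]; positivity
      have hμ1 : ∑ k, μ k = 1 := by
        simp only [hμdef]
        rw [← Finset.sum_div]
        exact div_self (hWpos n).ne'
      have hxb : ∀ k, x k ^ 2 ≤ c := fun k => hbound k (n + 1) hmemτ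
      -- the universal output is the μ-mixture of the individual outputs
      have hdot : dotp (univWeight c w P (n + 1)) (P (n + 1)) = ∑ k, μ k * x k := by
        simp only [dotp, univWeight, Finset.sum_apply, Pi.smul_apply, smul_eq_mul,
          Finset.sum_mul, Finset.mul_sum, hx, hμ]
        rw [Finset.sum_comm]
        exact Finset.sum_congr rfl fun r _ => Finset.sum_congr rfl fun i _ => by ring
      calc W (n + 1) = ∑ k, Real.exp (-cumLoss w P k n / (2 * c))
              * Real.exp (-(x k) ^ 2 / (2 * c)) := by
            refine Finset.sum_congr rfl fun k _ => ?_
            rw [← Real.exp_add, hcumsucc k n]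
            congr 1
            field_simp
            ring
        _ = W n * ∑ k, μ k * Real.exp (-(x k) ^ 2 / (2 * c)) := by
            rw [Finset.mul_sum]
            refine Finset.sum_congr rfl fun k _ => ?_
            rw [hμdef k]
            field_simp
            exact (div_self (hWpos n).ne').symm
        _ ≤ W n * Real.exp (-(∑ k, μ k * x k) ^ 2 / (2 * c)) := by
            refine mul_le_mul_of_nonneg_left ?_ (hWpos n).le
            exact mix_le hc μ x hμ0 hμ1 hxb
        _ ≤ (R : ℝ) * Real.exp (-univLoss c w P n / (2 * c))
              * Real.exp (-(∑ k, μ k * x k) ^ 2 / (2 * c)) :=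
            mul_le_mul_of_nonneg_right (ih hn) (Real.exp_pos _).le
        _ = (R : ℝ) * Real.exp (-univLoss c w P (n + 1) / (2 * c)) := by
            rw [mul_assoc, ← Real.exp_add, huLsucc n, hdot]
            congr 2
            field_simp
            ring
  -- pick the best rank
  obtain ⟨r0, -, hr0⟩ := Finset.exists_min_image Finset.univ
    (fun r => cumLoss w P r τ) ⟨⟨0, by omega⟩, Finset.mem_univ _⟩
  have hiInf : (⨅ r : Fin R, cumLoss w P r τ) = cumLoss w P r0 τ :=
    le_antisymm (ciInf_le (Finite.bddBelow_range _) r0)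
      (le_ciInf fun r => hr0 r (Finset.mem_univ r))
  -- lower bound the potential at time τ
  have hlow : Real.exp (-cumLoss w P r0 τ / (2 * c)) ≤ W τ :=
    Finset.single_le_sum (f := fun k => Real.exp (-cumLoss w P k τ / (2 * c)))
      (fun k _ => (Real.exp_pos _).le) (Finset.mem_univ r0)
  have hRpos : (0 : ℝ) < (R : ℝ) := by exact_mod_cast Nat.pos_of_ne_zero (by omega)
  have hchain : Real.exp (-cumLoss w P r0 τ / (2 * c)) ≤
      Real.exp (Real.log R + -univLoss c w P τ / (2 * c)) := by
    rw [Real.exp_add, Real.exp_log hRpos]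
    exact hlow.trans (key τ le_rfl)
  have h' : -cumLoss w P r0 τ / (2 * c) ≤ Real.log R + -univLoss c w P τ / (2 * c) :=
    Real.exp_le_exp.mp hchain
  have h3 := mul_le_mul_of_nonneg_right h' h2c.le
  rw [div_mul_cancel₀ _ h2c.ne', add_mul, div_mul_cancel₀ _ h2c.ne'] at h3
  -- h3 : -cumLoss ≤ log R * (2 c) + -univLoss
  have hτpos : (0 : ℝ) < (τ : ℝ) := by exact_mod_cast hτ
  have hfinal : univLoss c w P τ ≤ cumLoss w P r0 τ + 2 * c * Real.log R := by linarith
  rw [hiInf]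
  have := mul_le_mul_of_nonneg_left hfinal (le_of_lt (by positivity : (0:ℝ) < 1 / (τ:ℝ)))
  calc (1 / (τ : ℝ)) * univLoss c w P τ
      ≤ (1 / (τ : ℝ)) * (cumLoss w P r0 τ + 2 * c * Real.log R) := this
    _ = (1 / (τ : ℝ)) * cumLoss w P r0 τ + (2 * c / (τ : ℝ)) * Real.log R := by ring
end

section
/- Let R ≥ 1 and let X_1, …, X_R be independent, identically distributed random variables, each exponentially distributed with mean λ > 0 (rate 1/λ). For 1 ≤ r ≤ R let X_(r) denote the r-th order statistic, and let α_r = Σ_{k=R−r+1}^{R} 1/k. Then for every threshold rank r₀ ∈ {1,…,R}, the SAWP estimator X_(r₀)/α_{r₀} is unbiased: E[ X_(r₀) / α_{r₀} ] = λ. -/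
open MeasureTheory ProbabilityTheory

/-- The `r`-th order statistic of the sample `x : Fin R → ℝ` (0-indexed: `orderStat x r`
is the `(r+1)`-th smallest value of the sample). -/
noncomputable def orderStat {R : ℕ} (x : Fin R → ℝ) (r : Fin R) : ℝ := x (Tuple.sort x r)

open Real Set
open scoped ENNReal

lemma orderStat_le_iff {R : ℕ} (x : Fin R → ℝ) (r : Fin R) (t : ℝ) :
    orderStat x r ≤ t ↔ (r : ℕ) < (Finset.univ.filter (fun i => x i ≤ t)).card := by
  classical
  have key := Tuple.lt_card_le_iff_apply_le_of_monotone (f := x ∘ Tuple.sort x) (a := t)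
    (j := r) (Tuple.monotone_sort x)
  have hcard : (Finset.univ.filter (fun i => (x ∘ Tuple.sort x) i ≤ t)).card
      = (Finset.univ.filter (fun i => x i ≤ t)).card := by
    apply Finset.card_bij' (fun i _ => Tuple.sort x i) (fun i _ => (Tuple.sort x).symm i)
    · intro i hi
      simp only [Finset.mem_filter, Finset.mem_univ, true_and] at hi ⊢
      exact hi
    · intro i hi
      simp only [Finset.mem_filter, Finset.mem_univ, true_and, Function.comp_apply,
        Equiv.apply_symm_apply] at hi ⊢
      exact hi
    · intro i _; simp
    · intro i _; simp
  rw [hcard] at key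
  rw [orderStat]
  exact Iff.symm (key.trans Iff.rfl)

lemma lt_orderStat_iff {R : ℕ} (x : Fin R → ℝ) (r : Fin R) (t : ℝ) :
    t < orderStat x r ↔ (Finset.univ.filter (fun i => x i ≤ t)).card ≤ (r : ℕ) := by
  rw [← not_le, orderStat_le_iff, not_lt]

lemma measurable_orderStat {R : ℕ} (r : Fin R) :
    Measurable (fun x : Fin R → ℝ => orderStat x r) := by
  classical
  apply measurable_of_Iic
  intro t
  have h1 : (fun x : Fin R → ℝ => orderStat x r) ⁻¹' Set.Iic t
      = (fun x : Fin R → ℝ => (Finset.univ.filter (fun i => x i ≤ t)).card)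
        ⁻¹' {n | (r : ℕ) < n} := by
    ext x
    simp [orderStat_le_iff]
  rw [h1]
  have h2 : Measurable (fun x : Fin R → ℝ => (Finset.univ.filter (fun i => x i ≤ t)).card) := by
    simp_rw [Finset.card_filter]
    apply Finset.measurable_sum
    intro i _
    exact Measurable.ite ((measurable_pi_apply i) measurableSet_Iic)
      measurable_const measurable_const
  exact h2 (by trivial)

lemma expMeasure_Iic {c : ℝ} (hc : 0 < c) (t : ℝ) (ht : 0 ≤ t) :
    expMeasure c (Set.Iic t) = ENNReal.ofReal (1 - Real.exp (-(c * t))) := by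
  rw [expMeasure, gammaMeasure, withDensity_apply _ measurableSet_Iic]
  have : ∀ y, gammaPDF 1 c y = exponentialPDF c y := fun y => rfl
  simp_rw [this]
  rw [lintegral_exponentialPDF_eq_antiDeriv hc t, if_pos ht]

lemma expMeasure_Ioi {c : ℝ} (hc : 0 < c) (t : ℝ) (ht : 0 ≤ t) :
    expMeasure c (Set.Ioi t) = ENNReal.ofReal (Real.exp (-(c * t))) := by
  have hprob : IsProbabilityMeasure (expMeasure c) := isProbabilityMeasure_expMeasure hc
  have h1 : Set.Ioi t = (Set.Iic t)ᶜ := by simp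
  rw [h1, measure_compl measurableSet_Iic (measure_ne_top _ _), expMeasure_Iic hc t ht,
    measure_univ]
  have hE : Real.exp (-(c * t)) ≤ 1 := Real.exp_le_one_iff.mpr (by nlinarith)
  rw [← ENNReal.ofReal_one, ← ENNReal.ofReal_sub _ (by linarith)]
  congr 1
  ring

lemma expMeasure_Iio_zero {c : ℝ} : expMeasure c (Set.Iio 0) = 0 := by
  rw [expMeasure, gammaMeasure, withDensity_apply _ measurableSet_Iio]
  have : ∀ y, gammaPDF 1 c y = exponentialPDF c y := fun y => rfl
  simp_rw [this]
  exact ProbabilityTheory.lintegral_exponentialPDF_of_nonpos le_rfl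

lemma integrable_aux {c : ℝ} (hc : 0 < c) (j m : ℕ) :
    IntegrableOn (fun t => (1 - Real.exp (-(c*t)))^j * Real.exp (-(c*t))^(m+1))
      (Set.Ioi (0:ℝ)) := by
  apply Integrable.mono (exp_neg_integrableOn_Ioi 0 hc)
  · apply Continuous.aestronglyMeasurable
    continuity
  · rw [ae_restrict_iff' measurableSet_Ioi]
    filter_upwards with t ht
    have h1 : 0 < Real.exp (-(c*t)) := Real.exp_pos _
    have h2 : Real.exp (-(c*t)) ≤ 1 := by
      apply Real.exp_le_one_iff.mpr
      nlinarith [Set.mem_Ioi.mp ht]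
    have h3 : (0:ℝ) ≤ 1 - Real.exp (-(c*t)) := by linarith
    simp only [neg_mul, Real.norm_eq_abs]
    rw [abs_of_nonneg (by positivity), abs_of_nonneg h1.le]
    calc (1 - Real.exp (-(c*t)))^j * Real.exp (-(c*t))^(m+1)
        ≤ 1 * Real.exp (-(c*t))^(m+1) := by
          apply mul_le_mul_of_nonneg_right _ (by positivity)
          exact pow_le_one₀ h3 (by linarith)
      _ ≤ Real.exp (-(c*t)) := by
          rw [one_mul]
          calc Real.exp (-(c*t))^(m+1) ≤ Real.exp (-(c*t))^1 :=
                pow_le_pow_of_le_one h1.le h2 (by omega)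
            _ = _ := pow_one _

lemma integral_aux {c : ℝ} (hc : 0 < c) : ∀ (j m : ℕ),
    ∫ t in Set.Ioi (0:ℝ), (1 - Real.exp (-(c*t)))^j * Real.exp (-(c*t))^(m+1)
      = (1/c) * (j.factorial * m.factorial / (m+1+j).factorial) := by
  intro j
  induction j with
  | zero =>
    intro m
    have h1 : ∀ t : ℝ, (1 - Real.exp (-(c*t)))^0 * Real.exp (-(c*t))^(m+1)
        = Real.exp (-(((m+1:ℕ) * c) * t)) := by
      intro t
      rw [pow_zero, one_mul, ← Real.exp_nat_mul]
      ring_nf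
    simp_rw [h1]
    have hb : (0:ℝ) < (m+1:ℕ) * c := by positivity
    have := MeasureTheory.integral_comp_mul_left_Ioi (fun x => Real.exp (-x)) 0 hb
    simp only [mul_zero, smul_eq_mul] at this
    rw [this, integral_exp_neg_Ioi, neg_zero, Real.exp_zero]
    rw [Nat.factorial_zero, Nat.factorial_succ]
    have hfac : (m.factorial : ℝ) ≠ 0 := by positivity
    field_simp
    push_cast
    ring
  | succ j ih =>
    intro m
    have hsplit : ∀ t : ℝ, (1 - Real.exp (-(c*t)))^(j+1) * Real.exp (-(c*t))^(m+1)
        = (1 - Real.exp (-(c*t)))^j * Real.exp (-(c*t))^(m+1)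
          - (1 - Real.exp (-(c*t)))^j * Real.exp (-(c*t))^(m+1+1) := by
      intro t; ring
    simp_rw [hsplit]
    rw [integral_sub (integrable_aux hc j m) (integrable_aux hc j (m+1)), ih m, ih (m+1)]
    have e1 : m + 1 + 1 + j = (m + 1 + j) + 1 := by omega
    have e2 : m + 1 + (j+1) = (m + 1 + j) + 1 := by omega
    rw [e1, e2, Nat.factorial_succ m, Nat.factorial_succ (m+1+j), Nat.factorial_succ j]
    have hne1 : ((m+1+j).factorial : ℝ) ≠ 0 := by positivity
    have hne2 : ((m+1+j:ℕ):ℝ) + 1 ≠ 0 := by positivity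
    field_simp
    push_cast
    ring
/-- Unbiasedness of the SAWP estimator (equations (3)–(4) of the paper): for `R` i.i.d.
exponential random variables with mean `λ` (rate `1/λ`), the scaled order statistic
`X_(r₀)/α_{r₀}` with `α_{r₀} = Σ_{k=R−r₀+1}^{R} 1/k` has expectation `λ`. -/
theorem sawp_unbiased
    {Ω : Type*} [MeasurableSpace Ω] (μ : Measure Ω) [IsProbabilityMeasure μ]
    {R : ℕ} (hR : 1 ≤ R) (lam : ℝ) (hlam : 0 < lam) (X : Fin R → Ω → ℝ)
    (hmeas : ∀ i, Measurable (X i))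
    (hindep : iIndepFun X μ)
    (hdist : ∀ i, Measure.map (X i) μ = expMeasure (1 / lam))
    (r₀ : ℕ) (hr1 : 1 ≤ r₀) (hrR : r₀ ≤ R) :
    ∫ ω, orderStat (fun i => X i ω) ⟨r₀ - 1, by omega⟩ /
        (∑ k ∈ Finset.Icc (R - r₀ + 1) R, (1 : ℝ) / k) ∂μ = lam := by
  
  classical
  set c : ℝ := 1 / lam with hc_def
  have hc : 0 < c := by positivity
  have hprob : IsProbabilityMeasure (expMeasure c) := isProbabilityMeasure_expMeasure hc
  let idx : Fin R := ⟨r₀ - 1, by omega⟩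
  let f : Ω → ℝ := fun ω => orderStat (fun i => X i ω) idx
  set α : ℝ := ∑ k ∈ Finset.Icc (R - r₀ + 1) R, (1 : ℝ) / k with hα_def
  have hα_pos : 0 < α := by
    apply Finset.sum_pos
    · intro k hk
      rw [Finset.mem_Icc] at hk
      have : 0 < k := by omega
      positivity
    · exact ⟨R, Finset.mem_Icc.mpr ⟨by omega, le_rfl⟩⟩
  have hXlaw : ∀ (i : Fin R) (s : Set ℝ), MeasurableSet s → μ (X i ⁻¹' s) = expMeasure c s := by
    intro i s hs
    rw [← hdist i, Measure.map_apply (hmeas i) hs]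
  have hf_meas : Measurable f := (measurable_orderStat idx).comp (measurable_pi_lambda _ hmeas)
  have hf_nn : 0 ≤ᵐ[μ] f := by
    have h0 : ∀ i : Fin R, ∀ᵐ ω ∂μ, 0 ≤ X i ω := by
      intro i
      have hnull : μ (X i ⁻¹' Set.Iio 0) = 0 := by
        rw [hXlaw i _ measurableSet_Iio, expMeasure_Iio_zero]
      rw [ae_iff]
      have hset : {ω | ¬ 0 ≤ X i ω} = X i ⁻¹' Set.Iio 0 := by
        ext ω; simp [not_le]
      rw [hset]; exact hnull
    filter_upwards [(ae_all_iff).mpr h0] with ω hω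
    exact hω _
  -- event set description
  have hEset : ∀ (t : ℝ) (S : Finset (Fin R)),
      {ω | Finset.univ.filter (fun i => X i ω ≤ t) = S}
        = ⋂ i ∈ Finset.univ, X i ⁻¹' (if i ∈ S then Set.Iic t else Set.Ioi t) := by
    intro t S
    ext ω
    simp only [Set.mem_setOf_eq, Set.mem_iInter, Set.mem_preimage, Finset.mem_univ,
      forall_true_left, Finset.ext_iff, Finset.mem_filter, true_and]
    refine forall_congr' fun i => ?_
    by_cases hi : i ∈ S <;> simp [hi, Set.mem_Iic, Set.mem_Ioi, not_le]
  have hEmeas : ∀ (t : ℝ) (S : Finset (Fin R)),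
      MeasurableSet {ω | Finset.univ.filter (fun i => X i ω ≤ t) = S} := by
    intro t S
    rw [hEset]
    refine MeasurableSet.biInter (Set.to_countable _) (fun i _ => ?_)
    exact (hmeas i) (by split <;> [exact measurableSet_Iic; exact measurableSet_Ioi])
  have hEvent : ∀ (t : ℝ) (S : Finset (Fin R)),
      μ {ω | Finset.univ.filter (fun i => X i ω ≤ t) = S}
        = expMeasure c (Set.Iic t) ^ S.card * expMeasure c (Set.Ioi t) ^ (R - S.card) := by
    intro t S
    rw [hEset]
    rw [hindep.measure_inter_preimage_eq_mul Finset.univ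
      (fun i _ => by split <;> [exact measurableSet_Iic; exact measurableSet_Ioi])]
    have hcongr : ∀ i ∈ Finset.univ, μ (X i ⁻¹' (if i ∈ S then Set.Iic t else Set.Ioi t))
        = if i ∈ S then expMeasure c (Set.Iic t) else expMeasure c (Set.Ioi t) := by
      intro i _
      by_cases hi : i ∈ S
      · rw [if_pos hi, if_pos hi, hXlaw i _ measurableSet_Iic]
      · rw [if_neg hi, if_neg hi, hXlaw i _ measurableSet_Ioi]
    rw [Finset.prod_congr rfl hcongr, Finset.prod_ite, Finset.prod_const, Finset.prod_const]
    have h1 : (Finset.univ.filter (fun i => i ∈ S)) = S := by ext i; simp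
    have h2 : (Finset.univ.filter (fun i => i ∉ S)) = Sᶜ := by ext i; simp
    rw [h1, h2, Finset.card_compl, Fintype.card_fin]
  -- survival function
  have hSurv : ∀ t : ℝ, μ {ω | t < f ω}
      = ∑ j ∈ Finset.range r₀, (R.choose j : ℝ≥0∞) *
          (expMeasure c (Set.Iic t) ^ j * expMeasure c (Set.Ioi t) ^ (R - j)) := by
    intro t
    have hset : {ω | t < f ω} = ⋃ S ∈ ((Finset.range r₀).biUnion
        (fun j => Finset.univ.powersetCard j) : Finset (Finset (Fin R))),
        {ω | Finset.univ.filter (fun i => X i ω ≤ t) = S} := by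
      ext ω
      simp only [Set.mem_setOf_eq, Set.mem_iUnion, Finset.mem_biUnion, Finset.mem_range,
        Finset.mem_powersetCard_univ, exists_prop]
      show t < orderStat (fun i => X i ω) idx ↔ _
      rw [lt_orderStat_iff]
      have hidx : (idx : ℕ) = r₀ - 1 := rfl
      constructor
      · intro h
        exact ⟨Finset.univ.filter (fun i => X i ω ≤ t),
          ⟨(Finset.univ.filter (fun i => X i ω ≤ t)).card, by omega, rfl⟩, rfl⟩
      · rintro ⟨S, ⟨j, hj, hcard⟩, hS⟩
        rw [hS, hcard]; omega
    rw [hset, measure_biUnion_finset ?hdisj (fun S _ => hEmeas t S)]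
    case hdisj =>
      intro S _ S' _ hne
      simp only [Function.onFun]
      rw [Set.disjoint_left]
      intro ω h1 h2
      exact hne (h1 ▸ h2 ▸ rfl)
    rw [Finset.sum_biUnion ?hdisj2]
    case hdisj2 =>
      intro j _ j' _ hne
      simp only [Function.onFun]
      rw [Finset.disjoint_left]
      intro S h1 h2
      rw [Finset.mem_powersetCard_univ] at h1 h2
      exact hne (h1 ▸ h2 ▸ rfl)
    apply Finset.sum_congr rfl
    intro j _
    rw [Finset.sum_congr rfl (fun S hS => by
      rw [hEvent t S, Finset.mem_powersetCard_univ.mp hS])]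
    rw [Finset.sum_const, Finset.card_powersetCard, Finset.card_fin, nsmul_eq_mul]
  -- layer cake and computation
  have hcont : ∀ n k : ℕ, Measurable fun t : ℝ => (1 - Real.exp (-(c*t)))^n * Real.exp (-(c*t))^k := by
    intro n k
    fun_prop
  have key : ∫⁻ ω, ENNReal.ofReal (f ω) ∂μ = ENNReal.ofReal (lam * α) := by
    rw [lintegral_eq_lintegral_meas_lt μ hf_nn hf_meas.aemeasurable]
    have hcong : ∫⁻ t in Set.Ioi (0:ℝ), μ {a | t < f a}
        = ∫⁻ t in Set.Ioi (0:ℝ), ∑ j ∈ Finset.range r₀,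
            (R.choose j : ℝ≥0∞) * ENNReal.ofReal
              ((1 - Real.exp (-(c*t)))^j * Real.exp (-(c*t))^(R-j)) := by
      apply setLIntegral_congr_fun measurableSet_Ioi
      intro t ht; beta_reduce
      rw [hSurv t]
      apply Finset.sum_congr rfl
      intro j hj
      rw [Finset.mem_range] at hj
      have ht0 : (0:ℝ) ≤ t := le_of_lt ht
      have hE1 : Real.exp (-(c*t)) ≤ 1 := Real.exp_le_one_iff.mpr (by nlinarith)
      rw [expMeasure_Iic hc t ht0, expMeasure_Ioi hc t ht0,
        ← ENNReal.ofReal_pow (by linarith), ← ENNReal.ofReal_pow (Real.exp_pos _).le,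
        ← ENNReal.ofReal_mul (pow_nonneg (by linarith) _)]
    rw [hcong]
    rw [lintegral_finset_sum _ (fun j _ =>
      ((hcont j (R-j)).ennreal_ofReal).const_mul _)]
    have hterm : ∀ j ∈ Finset.range r₀,
        ∫⁻ t in Set.Ioi (0:ℝ), (R.choose j : ℝ≥0∞) * ENNReal.ofReal
            ((1 - Real.exp (-(c*t)))^j * Real.exp (-(c*t))^(R-j))
        = ENNReal.ofReal (lam * (1 / ((R - j : ℕ) : ℝ))) := by
      intro j hj
      rw [Finset.mem_range] at hj
      obtain ⟨m, hm⟩ : ∃ m, R - j = m + 1 := ⟨R - j - 1, by omega⟩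
      rw [hm]
      rw [lintegral_const_mul _ ((hcont j (m+1)).ennreal_ofReal)]
      rw [← ofReal_integral_eq_lintegral_ofReal (integrable_aux hc j m) ?nn]
      case nn =>
        filter_upwards [ae_restrict_mem measurableSet_Ioi] with t ht
        simp only [Pi.zero_apply]
        have hE1 : Real.exp (-(c*t)) ≤ 1 := Real.exp_le_one_iff.mpr
          (by nlinarith [Set.mem_Ioi.mp ht])
        have h3 : (0:ℝ) ≤ 1 - Real.exp (-(c*t)) := by linarith
        positivity
      rw [integral_aux hc j m, ← ENNReal.ofReal_natCast,
        ← ENNReal.ofReal_mul (by positivity)]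
      congr 1
      have hmj : m + 1 + j = R := by omega
      rw [hmj]
      have h2 : 1 / c = lam := by rw [hc_def]; field_simp
      rw [h2]
      have hkey : R.choose j * j.factorial * ((m+1) * m.factorial) = R.factorial := by
        have h4 : (m+1) * m.factorial = (R - j).factorial := by
          rw [hm, Nat.factorial_succ]
        rw [h4]
        exact Nat.choose_mul_factorial_mul_factorial (by omega)
      have hkeyR : (R.choose j : ℝ) * (j.factorial : ℝ) * (((m:ℝ)+1) * (m.factorial : ℝ))
          = (R.factorial : ℝ) := by exact_mod_cast congrArg (Nat.cast : ℕ → ℝ) hkey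
      have hfacR : (R.factorial : ℝ) ≠ 0 := by positivity
      have hfacj : (j.factorial : ℝ) ≠ 0 := by positivity
      have hfacm : (m.factorial : ℝ) ≠ 0 := by positivity
      have hm1 : ((m:ℝ)+1) ≠ 0 := by positivity
      push_cast
      field_simp
      nlinarith [hkeyR]
    rw [Finset.sum_congr rfl hterm,
      ← ENNReal.ofReal_sum_of_nonneg (fun j _ => by positivity)]
    congr 1
    rw [← Finset.mul_sum]
    congr 1
    rw [hα_def]
    apply Finset.sum_nbij' (i := fun j => R - j) (j := fun k => R - k)
    · intro j hj; rw [Finset.mem_range] at hj; rw [Finset.mem_Icc]; omega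
    · intro k hk; rw [Finset.mem_Icc] at hk; rw [Finset.mem_range]; omega
    · intro j hj; rw [Finset.mem_range] at hj; omega
    · intro k hk; rw [Finset.mem_Icc] at hk; omega
    · intro j hj; rfl
  -- conclude
  have hint : ∫ ω, f ω ∂μ = lam * α := by
    rw [integral_eq_lintegral_of_nonneg_ae hf_nn hf_meas.aestronglyMeasurable, key,
      ENNReal.toReal_ofReal (by positivity)]
  show ∫ ω, f ω / α ∂μ = lam
  rw [integral_div, hint, mul_div_assoc, div_self hα_pos.ne', mul_one]
end

section
/- Let R ≥ 1 and let X_1, …, X_R be independent, identically distributed random variables, each exponentially distributed with mean λ > 0 (rate 1/λ). For 1 ≤ r ≤ R let X_(r) denote the r-th order statistic. Fix a threshold rank r₀ ∈ {1,…,R} and define the TLOSF weights w_r = 1/r₀ for 1 ≤ r < r₀ and w_{r₀} = (R − r₀ + 1)/r₀. Then the truncated linear order statistics filter Σ_{r=1}^{r₀} w_r X_(r) is an unbiased estimator: E[ Σ_{r=1}^{r₀} w_r X_(r) ] = λ. -/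
open MeasureTheory ProbabilityTheory

section Aux
open Finset Real Filter Topology
open scoped ENNReal NNReal

private noncomputable def pfun (lam t : ℝ) : ℝ := rexp (-(t/lam))
private noncomputable def Tfun (lam : ℝ) (R l : ℕ) (t : ℝ) : ℝ :=
  (l : ℝ) * (R.choose l) * pfun lam t ^ l * (1 - pfun lam t) ^ (R - l)
private noncomputable def hfun (lam : ℝ) (R k : ℕ) (t : ℝ) : ℝ :=
  ∑ l ∈ Icc k R, (R.choose l : ℝ) * pfun lam t ^ l * (1 - pfun lam t) ^ (R - l)

private lemma hasDerivAt_pfun {lam : ℝ} (hlam : 0 < lam) (t : ℝ) :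
    HasDerivAt (pfun lam) (-(1/lam) * pfun lam t) t := by
  have h1 : HasDerivAt (fun t : ℝ => -(t/lam)) (-(1/lam)) t := by
    simpa [div_eq_mul_inv, neg_mul] using
      ((hasDerivAt_id t).div_const lam).fun_neg
  show HasDerivAt (fun t => rexp (-(t/lam))) _ t
  simpa [pfun, mul_comm] using h1.exp

private lemma hasDerivAt_term {lam : ℝ} (hlam : 0 < lam) (R : ℕ) {l : ℕ} (hl1 : 1 ≤ l)
    (hlR : l ≤ R) (t : ℝ) :
    HasDerivAt (fun t => (R.choose l : ℝ) * pfun lam t ^ l * (1 - pfun lam t) ^ (R - l))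
      (-(1/lam) * (Tfun lam R l t - Tfun lam R (l+1) t)) t := by
  have hp := hasDerivAt_pfun hlam t
  have d1 : HasDerivAt (fun t => pfun lam t ^ l)
      ((l : ℝ) * pfun lam t ^ (l-1) * (-(1/lam) * pfun lam t)) t := hp.pow l
  have d2 : HasDerivAt (fun t => (1 - pfun lam t) ^ (R - l))
      (((R - l : ℕ) : ℝ) * (1 - pfun lam t) ^ (R - l - 1) * ((1/lam) * pfun lam t)) t := by
    have := ((hasDerivAt_const t (1:ℝ)).fun_sub hp).fun_pow (R - l)
    simpa [neg_mul, sub_neg_eq_add] using this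
  have d3 := ((d1.const_mul ((R.choose l : ℝ))).fun_mul d2)
  refine d3.congr_deriv (Eq.symm ?_)
  have hps : pfun lam t ^ (l - 1) * pfun lam t = pfun lam t ^ l := by
    rw [← pow_succ]
    congr 1
    omega
  have hchoose : ((l+1 : ℕ) : ℝ) * (R.choose (l+1) : ℝ) = (R.choose l : ℝ) * ((R - l : ℕ) : ℝ) := by
    rw [← Nat.cast_mul, ← Nat.cast_mul, mul_comm ((l+1:ℕ)) _, Nat.choose_succ_right_eq]
  have hRl : R - (l+1) = R - l - 1 := by omega
  simp only [Tfun, hRl]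
  push_cast at hchoose ⊢
  linear_combination ((1/lam) * (l:ℝ) * (R.choose l : ℝ) * (1 - pfun lam t)^(R-l)) * hps +
    ((1/lam) * pfun lam t ^ (l+1) * (1 - pfun lam t)^(R-l-1)) * hchoose

private lemma hasDerivAt_hfun {lam : ℝ} (hlam : 0 < lam) (R k : ℕ) (hk1 : 1 ≤ k) (hkR : k ≤ R)
    (t : ℝ) : HasDerivAt (hfun lam R k) (-(1/lam) * Tfun lam R k t) t := by
  have hsum : HasDerivAt (hfun lam R k)
      (∑ l ∈ Icc k R, -(1/lam) * (Tfun lam R l t - Tfun lam R (l+1) t)) t := by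
    apply HasDerivAt.fun_sum
    intro l hl
    rw [Finset.mem_Icc] at hl
    exact hasDerivAt_term hlam R (le_trans hk1 hl.1) hl.2 t
  convert hsum using 1
  rw [← Finset.mul_sum]
  congr 1
  have : ∑ l ∈ Icc k R, (Tfun lam R l t - Tfun lam R (l+1) t)
      = ∑ i ∈ range (R + 1 - k), (Tfun lam R (k+i) t - Tfun lam R (k+i+1) t) := by
    rw [← Finset.Ico_add_one_right_eq_Icc, Finset.sum_Ico_eq_sum_range]
  have tele := Finset.sum_range_sub' (fun i => Tfun lam R (k+i) t) (R+1-k)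
  simp only [← Nat.add_assoc] at tele
  rw [this, tele]
  have h1 : k + (R + 1 - k) = R + 1 := by omega
  rw [h1, Nat.add_zero]
  have h2 : Tfun lam R (R+1) t = 0 := by
    simp [Tfun, Nat.choose_succ_self]
  rw [h2, sub_zero]

private lemma pfun_tendsto {lam : ℝ} (hlam : 0 < lam) :
    Tendsto (pfun lam) atTop (𝓝 0) := by
  have h1 : Tendsto (fun t : ℝ => t / lam) atTop atTop := tendsto_id.atTop_div_const hlam
  have h2 : Tendsto (fun t : ℝ => -(t / lam)) atTop atBot := tendsto_neg_atBot_iff.mpr h1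
  exact Real.tendsto_exp_atBot.comp h2

private lemma hfun_tendsto {lam : ℝ} (hlam : 0 < lam) (R k : ℕ) (hk1 : 1 ≤ k) :
    Tendsto (hfun lam R k) atTop (𝓝 0) := by
  have : Tendsto (hfun lam R k) atTop
      (𝓝 (∑ l ∈ Icc k R, (R.choose l : ℝ) * (0:ℝ) ^ l * (1 - 0) ^ (R - l))) := by
    apply tendsto_finset_sum
    intro l hl
    exact ((tendsto_const_nhds.mul ((pfun_tendsto hlam).pow l)).mul
      ((tendsto_const_nhds.sub (pfun_tendsto hlam)).pow (R - l)))
  convert this using 2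
  rw [Finset.sum_eq_zero]
  intro l hl
  rw [Finset.mem_Icc] at hl
  have : (0:ℝ) ^ l = 0 := zero_pow (by omega)
  simp [this]

private lemma hfun_zero {lam : ℝ} (R k : ℕ) (hkR : k ≤ R) : hfun lam R k 0 = 1 := by
  have hp0 : pfun lam 0 = 1 := by simp [pfun]
  unfold hfun
  rw [Finset.sum_eq_single R]
  · simp [hp0]
  · intro l hl hlne
    rw [Finset.mem_Icc] at hl
    have : (1 - pfun lam 0) ^ (R - l) = 0 := by
      rw [hp0, sub_self]; exact zero_pow (by omega)
    simp [this]
  · intro h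
    exact absurd (Finset.mem_Icc.mpr ⟨hkR, le_refl R⟩) h

private lemma pfun_nonneg (lam t : ℝ) : 0 ≤ pfun lam t := (Real.exp_pos _).le

private lemma pfun_le_one {lam : ℝ} (hlam : 0 < lam) {t : ℝ} (ht : 0 ≤ t) : pfun lam t ≤ 1 := by
  rw [pfun, Real.exp_le_one_iff]
  simp [div_nonneg ht hlam.le]

private lemma Tfun_nonneg {lam : ℝ} (hlam : 0 < lam) (R k : ℕ) {t : ℝ} (ht : 0 ≤ t) :
    0 ≤ Tfun lam R k t := by
  unfold Tfun
  apply mul_nonneg (mul_nonneg (mul_nonneg (by positivity) (by positivity))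
    (pow_nonneg (pfun_nonneg lam t) _))
  exact pow_nonneg (by linarith [pfun_le_one hlam ht]) _

private lemma hasDerivAt_g {lam : ℝ} (hlam : 0 < lam) (R k : ℕ) (hk1 : 1 ≤ k) (hkR : k ≤ R)
    (t : ℝ) : HasDerivAt (fun t => -lam * hfun lam R k t) (Tfun lam R k t) t := by
  have := (hasDerivAt_hfun hlam R k hk1 hkR t).const_mul (-lam)
  refine this.congr_deriv ?_
  rw [← mul_assoc, neg_mul_neg, mul_one_div_cancel hlam.ne', one_mul]

private lemma g_tendsto {lam : ℝ} (hlam : 0 < lam) (R k : ℕ) (hk1 : 1 ≤ k) :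
    Tendsto (fun t => -lam * hfun lam R k t) atTop (𝓝 0) := by
  have := (hfun_tendsto hlam R k hk1).const_mul (-lam)
  simpa using this

private lemma key_integral {lam : ℝ} (hlam : 0 < lam) (R k : ℕ) (hk1 : 1 ≤ k) (hkR : k ≤ R) :
    ∫ t in Set.Ioi (0:ℝ), Tfun lam R k t = lam := by
  rw [integral_Ioi_of_hasDerivAt_of_nonneg' (l := 0)
    (fun t _ => hasDerivAt_g hlam R k hk1 hkR t)
    (fun t ht => Tfun_nonneg hlam R k (le_of_lt ht))
    (g_tendsto hlam R k hk1)]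
  rw [hfun_zero R k hkR]
  ring

private lemma key_integrable {lam : ℝ} (hlam : 0 < lam) (R k : ℕ) (hk1 : 1 ≤ k) (hkR : k ≤ R) :
    IntegrableOn (Tfun lam R k) (Set.Ioi (0:ℝ)) :=
  integrableOn_Ioi_deriv_of_nonneg' (fun t _ => hasDerivAt_g hlam R k hk1 hkR t)
    (fun t ht => Tfun_nonneg hlam R k (le_of_lt ht)) (g_tendsto hlam R k hk1)

private lemma filter_lt_eq (R k : ℕ) (h : k ≤ R) :
    (univ.filter fun j : Fin R => (j:ℕ) < k)
      = (univ : Finset (Fin k)).map ⟨Fin.castLE h, Fin.castLE_injective h⟩ := by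
  ext j
  simp only [mem_filter, mem_univ, true_and, Finset.mem_map, Function.Embedding.coeFn_mk]
  constructor
  · intro hj
    exact ⟨⟨(j:ℕ), hj⟩, by ext; simp⟩

  · rintro ⟨r, -, rfl⟩
    exact r.2

private lemma card_filter_lt (R k : ℕ) (h : k ≤ R) :
    (univ.filter fun j : Fin R => (j:ℕ) < k).card = k := by
  rw [filter_lt_eq R k h, Finset.card_map, Finset.card_univ, Fintype.card_fin]

private lemma card_filter_not_lt (R k : ℕ) (h : k ≤ R) :
    (univ.filter fun j : Fin R => ¬ (j:ℕ) < k).card = R - k := by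
  have := Finset.card_filter_add_card_filter_not
    (s := (univ : Finset (Fin R))) (p := fun j : Fin R => (j:ℕ) < k)
  rw [card_filter_lt R k h, Finset.card_univ, Fintype.card_fin] at this
  omega

private lemma sum_filter_lt (R k : ℕ) (h : k ≤ R) (f : Fin R → ℝ) :
    ∑ j ∈ univ.filter (fun j : Fin R => (j:ℕ) < k), f j
      = ∑ r : Fin k, f (Fin.castLE h r) := by
  rw [filter_lt_eq R k h, Finset.sum_map]
  rfl

/-- count transfer through the sorting permutation -/
private lemma card_filter_sort (R : ℕ) (x : Fin R → ℝ) (t : ℝ) :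
    (univ.filter fun i : Fin R => t < x i).card
      = (univ.filter fun j : Fin R => t < orderStat x j).card := by
  apply Finset.card_bij (fun i _ => (Tuple.sort x).symm i)
  · intro i hi
    simp only [mem_filter, mem_univ, true_and] at hi ⊢
    simpa [orderStat] using hi
  · intro a ha b hb hab
    exact (Tuple.sort x).symm.injective hab
  · intro j hj
    refine ⟨Tuple.sort x j, ?_, by simp⟩
    simp only [mem_filter, mem_univ, true_and] at hj ⊢
    exact hj

private lemma orderStat_lt_iff (R r₀ : ℕ) (hr1 : 1 ≤ r₀) (hrR : r₀ ≤ R) (x : Fin R → ℝ) (t : ℝ) :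
    t < orderStat x ⟨r₀ - 1, by omega⟩
      ↔ R - r₀ + 1 ≤ (univ.filter fun i : Fin R => t < x i).card := by
  set q : Fin R := ⟨r₀ - 1, by omega⟩ with hq
  have mono : Monotone (x ∘ Tuple.sort x) := Tuple.monotone_sort x
  rw [card_filter_sort]
  constructor
  · intro ht
    have hsub : (univ.filter fun j : Fin R => ¬ (j:ℕ) < r₀ - 1)
        ⊆ (univ.filter fun j : Fin R => t < orderStat x j) := by
      intro j hj
      simp only [mem_filter, mem_univ, true_and, not_lt] at hj ⊢
      have hqj : q ≤ j := hj
      exact lt_of_lt_of_le ht (mono hqj)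
    have := Finset.card_le_card hsub
    rw [card_filter_not_lt R (r₀ - 1) (by omega)] at this
    omega
  · intro hc
    by_contra hnot
    push_neg at hnot
    have hsub : (univ.filter fun j : Fin R => t < orderStat x j)
        ⊆ (univ.filter fun j : Fin R => ¬ (j:ℕ) < r₀) := by
      intro j hj
      simp only [mem_filter, mem_univ, true_and, not_lt] at hj ⊢
      by_contra hlt
      push_neg at hlt
      have hjq : j ≤ q := by
        show (j:ℕ) ≤ r₀ - 1
        omega
      exact absurd (lt_of_lt_of_le hj (mono hjq)) (not_lt.mpr hnot)
    have := Finset.card_le_card hsub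
    rw [card_filter_not_lt R r₀ hrR] at this
    omega

private lemma tlosf_sum_eq (R r₀ : ℕ) (hr1 : 1 ≤ r₀) (hrR : r₀ ≤ R) (x : Fin R → ℝ) :
    ∑ r : Fin r₀,
        (if (r : ℕ) + 1 < r₀ then (1 : ℝ) / r₀ else ((R : ℝ) - r₀ + 1) / r₀) *
          orderStat x (Fin.castLE hrR r)
      = (1/(r₀:ℝ)) * ∑ i : Fin R, min (x i) (orderStat x ⟨r₀ - 1, by omega⟩) := by
  have mono : Monotone (x ∘ Tuple.sort x) := Tuple.monotone_sort x
  set q : Fin R := ⟨r₀ - 1, by omega⟩ with hq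
  -- RHS: re-index through the sorting permutation
  have step1 : ∑ i : Fin R, min (x i) (orderStat x q)
      = ∑ j : Fin R, min (orderStat x j) (orderStat x q) :=
    (Equiv.sum_comp (Tuple.sort x) (fun i => min (x i) (orderStat x q))).symm
  have step2 : ∀ j : Fin R, min (orderStat x j) (orderStat x q)
      = if (j:ℕ) < r₀ then orderStat x j else orderStat x q := by
    intro j
    by_cases hj : (j:ℕ) < r₀
    · rw [if_pos hj]
      apply min_eq_left
      have : j ≤ q := by
        show (j:ℕ) ≤ r₀ - 1
        omega
      exact mono this
    · rw [if_neg hj]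
      apply min_eq_right
      have : q ≤ j := by
        show (r₀ - 1 : ℕ) ≤ (j:ℕ)
        omega
      exact mono this
  have step3 : ∑ j : Fin R, min (orderStat x j) (orderStat x q)
      = (∑ r : Fin r₀, orderStat x (Fin.castLE hrR r)) + ((R - r₀ : ℕ) : ℝ) * orderStat x q := by
    rw [Finset.sum_congr rfl (fun j _ => step2 j), Finset.sum_ite,
      sum_filter_lt R r₀ hrR, Finset.sum_const, card_filter_not_lt R r₀ hrR]
    simp [nsmul_eq_mul]
  -- LHS
  have qcast : Fin.castLE hrR (⟨r₀ - 1, by omega⟩ : Fin r₀) = q := by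
    ext; simp [hq]
  have lhs : ∑ r : Fin r₀,
        (if (r : ℕ) + 1 < r₀ then (1 : ℝ) / r₀ else ((R : ℝ) - r₀ + 1) / r₀) *
          orderStat x (Fin.castLE hrR r)
      = (1/(r₀:ℝ)) * ((∑ r : Fin r₀, orderStat x (Fin.castLE hrR r))
          + ((R:ℝ) - r₀) * orderStat x q) := by
    have hlt : r₀ - 1 < r₀ := by omega
    have qcast2 : Fin.castLE hrR (⟨r₀ - 1, hlt⟩ : Fin r₀) = q := by ext; simp [hq]
    have expand : ∀ r : Fin r₀,
        (if (r : ℕ) + 1 < r₀ then (1 : ℝ) / r₀ else ((R : ℝ) - r₀ + 1) / r₀) *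
          orderStat x (Fin.castLE hrR r)
        = (1/(r₀:ℝ)) * orderStat x (Fin.castLE hrR r)
          + (if r = (⟨r₀ - 1, hlt⟩ : Fin r₀) then
              ((R:ℝ) - r₀)/r₀ * orderStat x (Fin.castLE hrR r) else 0) := by
      intro r
      by_cases hr : (r:ℕ) + 1 < r₀
      · have hne : r ≠ (⟨r₀ - 1, hlt⟩ : Fin r₀) := by
          intro hcon
          have : (r:ℕ) = r₀ - 1 := by rw [hcon]
          omega
        rw [if_pos hr, if_neg hne, add_zero]
      · have hreq : r = (⟨r₀ - 1, hlt⟩ : Fin r₀) := by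
          have h2 := r.2
          ext
          simp only []
          omega
        rw [if_neg hr, if_pos hreq, hreq, qcast2]
        ring
    rw [Finset.sum_congr rfl (fun r _ => expand r), Finset.sum_add_distrib]
    rw [Finset.sum_eq_single (⟨r₀ - 1, hlt⟩ : Fin r₀) (fun b _ hb => if_neg hb)
      (fun h => absurd (Finset.mem_univ _) h), if_pos rfl, qcast2, ← Finset.mul_sum]
    ring
  rw [lhs, step1, step3]
  have : ((R - r₀ : ℕ) : ℝ) = (R:ℝ) - r₀ := by
    rw [Nat.cast_sub hrR]
  rw [this]

private lemma expMeasure_Iic_s12 {lam : ℝ} (hlam : 0 < lam) {t : ℝ} (ht : 0 ≤ t) :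
    expMeasure (1/lam) (Set.Iic t) = ENNReal.ofReal (1 - pfun lam t) := by
  have hrate : (0:ℝ) < 1/lam := by positivity
  have : IsProbabilityMeasure (expMeasure (1/lam)) := isProbabilityMeasure_expMeasure hrate
  rw [← ofReal_cdf]
  rw [cdf_expMeasure_eq hrate, if_pos ht]
  congr 2
  rw [pfun]
  congr 1
  field_simp

private lemma expMeasure_Ioi_s12 {lam : ℝ} (hlam : 0 < lam) {t : ℝ} (ht : 0 ≤ t) :
    expMeasure (1/lam) (Set.Ioi t) = ENNReal.ofReal (pfun lam t) := by
  have hrate : (0:ℝ) < 1/lam := by positivity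
  have : IsProbabilityMeasure (expMeasure (1/lam)) := isProbabilityMeasure_expMeasure hrate
  have hcompl : Set.Ioi t = (Set.Iic t)ᶜ := (Set.compl_Iic (a := t)).symm
  rw [hcompl, measure_compl measurableSet_Iic (measure_ne_top _ _), expMeasure_Iic_s12 hlam ht,
    measure_univ]
  have hp0 : 0 ≤ pfun lam t := (Real.exp_pos _).le
  have hp1 : pfun lam t ≤ 1 := by
    rw [pfun, Real.exp_le_one_iff]
    simp [div_nonneg ht hlam.le]
  refine ENNReal.sub_eq_of_eq_add ENNReal.ofReal_ne_top ?_
  rw [← ENNReal.ofReal_add hp0 (by linarith), ← ENNReal.ofReal_one]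
  congr 1
  ring

private lemma expMeasure_Iio_zero_s12 {lam : ℝ} (hlam : 0 < lam) :
    expMeasure (1/lam) (Set.Iio 0) = 0 := by
  have : expMeasure (1/lam) (Set.Iio 0) = ∫⁻ y in Set.Iio (0:ℝ), exponentialPDF (1/lam) y := by
    rw [expMeasure, gammaMeasure, withDensity_apply _ measurableSet_Iio]
    rfl
  rw [this, lintegral_exponentialPDF_of_nonpos le_rfl]

private lemma lint_term {lam : ℝ} (hlam : 0 < lam) (R k : ℕ) (hk1 : 1 ≤ k) (hkR : k ≤ R) :
    ∫⁻ t in Set.Ioi (0:ℝ), ((k:ℝ≥0∞) * ((R.choose k : ℝ≥0∞)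
        * (ENNReal.ofReal (pfun lam t))^k * (ENNReal.ofReal (1 - pfun lam t))^(R-k)))
      = ENNReal.ofReal lam := by
  have hpt : ∀ t ∈ Set.Ioi (0:ℝ), ((k:ℝ≥0∞) * ((R.choose k : ℝ≥0∞)
        * (ENNReal.ofReal (pfun lam t))^k * (ENNReal.ofReal (1 - pfun lam t))^(R-k)))
      = ENNReal.ofReal (Tfun lam R k t) := by
    intro t ht
    have hq : (0:ℝ) ≤ 1 - pfun lam t := by linarith [pfun_le_one hlam (le_of_lt ht)]
    have c1 : (0:ℝ) ≤ (k:ℝ) := Nat.cast_nonneg k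
    have c2 : (0:ℝ) ≤ (k:ℝ) * (R.choose k : ℝ) := mul_nonneg c1 (Nat.cast_nonneg _)
    have c3 : (0:ℝ) ≤ (k:ℝ) * (R.choose k : ℝ) * pfun lam t ^ k :=
      mul_nonneg c2 (pow_nonneg (pfun_nonneg lam t) k)
    rw [Tfun, ENNReal.ofReal_mul c3, ENNReal.ofReal_mul c2, ENNReal.ofReal_mul c1,
      ENNReal.ofReal_pow (pfun_nonneg lam t),
      ENNReal.ofReal_pow hq, ENNReal.ofReal_natCast, ENNReal.ofReal_natCast]
    ring
  rw [setLIntegral_congr_fun measurableSet_Ioi hpt]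
  rw [← ofReal_integral_eq_lintegral_ofReal (key_integrable hlam R k hk1 hkR)
    ((ae_restrict_iff' measurableSet_Ioi).mpr
      (Filter.Eventually.of_forall fun t ht => Tfun_nonneg hlam R k (le_of_lt ht)))]
  rw [key_integral hlam R k hk1 hkR]

private lemma count_expectation {Ω : Type*} [MeasurableSpace Ω] (μ : Measure Ω)
    [IsProbabilityMeasure μ] {R : ℕ} (X : Fin R → Ω → ℝ) (hmeas : ∀ i, Measurable (X i))
    (hindep : iIndepFun X μ) (m : ℕ) {P Qv : ℝ≥0∞} {t : ℝ}
    (hP : ∀ i, μ (X i ⁻¹' Set.Ioi t) = P) (hQ : ∀ i, μ (X i ⁻¹' Set.Iic t) = Qv) :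
    ∑ i : Fin R, ∫⁻ ω, (if (t < X i ω ∧ m ≤ (univ.filter fun j => t < X j ω).card)
        then (1:ℝ≥0∞) else 0) ∂μ
      = ∑ k ∈ range (R+1),
          (if m ≤ k then (k:ℝ≥0∞) else 0) * ((R.choose k : ℝ≥0∞) * P^k * Qv^(R-k)) := by
  classical
  set Sf : Ω → Finset (Fin R) := fun ω => univ.filter fun j => t < X j ω with hSf
  have hE : ∀ S : Finset (Fin R), {ω | Sf ω = S}
      = ⋂ j, (if j ∈ S then X j ⁻¹' Set.Ioi t else X j ⁻¹' Set.Iic t) := by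
    intro S
    ext ω
    simp only [Set.mem_setOf_eq, Set.mem_iInter, hSf, Finset.ext_iff, Finset.mem_filter,
      Finset.mem_univ, true_and]
    constructor
    · intro h j
      by_cases hj : j ∈ S
      · simp only [hj, if_true, Set.mem_preimage, Set.mem_Ioi]
        exact (h j).mpr hj
      · simp only [hj, if_false, Set.mem_preimage, Set.mem_Iic]
        exact not_lt.mp (fun hlt => hj ((h j).mp hlt))
    · intro h j
      have := h j
      by_cases hj : j ∈ S
      · simp only [hj, if_true, Set.mem_preimage, Set.mem_Ioi] at this
        simp [hj, this]
      · simp only [hj, if_false, Set.mem_preimage, Set.mem_Iic] at this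
        simp only [hj, iff_false, not_lt]
        exact this
  have hEmeas : ∀ S : Finset (Fin R), MeasurableSet {ω | Sf ω = S} := by
    intro S
    rw [hE]
    refine MeasurableSet.iInter fun j => ?_
    split
    · exact (hmeas j) measurableSet_Ioi
    · exact (hmeas j) measurableSet_Iic
  have hEval : ∀ S : Finset (Fin R), μ {ω | Sf ω = S} = P ^ S.card * Qv ^ (R - S.card) := by
    intro S
    rw [hE S]
    rw [hindep.meas_iInter (fun j => ?_)]
    · have hval : ∀ j : Fin R, μ (if j ∈ S then X j ⁻¹' Set.Ioi t else X j ⁻¹' Set.Iic t)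
          = if j ∈ S then P else Qv := by
        intro j
        split
        · exact hP j
        · exact hQ j
      rw [Finset.prod_congr rfl (fun j _ => hval j), Finset.prod_ite, Finset.prod_const,
        Finset.prod_const]
      have hfm : (univ.filter fun j : Fin R => j ∈ S) = S := by
        ext j; simp
      have hfc : (univ.filter fun j : Fin R => ¬ j ∈ S).card = R - S.card := by
        have := Finset.card_filter_add_card_filter_not
          (s := (univ : Finset (Fin R))) (p := fun j : Fin R => j ∈ S)
        rw [hfm] at this
        rw [Finset.card_univ, Fintype.card_fin] at this
        omega
      rw [hfm, hfc]
    · by_cases hj : j ∈ S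
      · simp only [hj, if_true]
        exact ⟨Set.Ioi t, measurableSet_Ioi, rfl⟩
      · simp only [hj, if_false]
        exact ⟨Set.Iic t, measurableSet_Iic, rfl⟩
  -- turn the sum of indicators into a count
  have hsum : ∀ ω, ∑ i : Fin R, (if (t < X i ω ∧ m ≤ (Sf ω).card) then (1:ℝ≥0∞) else 0)
      = (if m ≤ (Sf ω).card then ((Sf ω).card : ℝ≥0∞) else 0) := by
    intro ω
    by_cases hm : m ≤ (Sf ω).card
    · simp only [hm, and_true, if_true]
      rw [Finset.sum_boole]
    · simp [hm]
  have hmeas_i : ∀ i : Fin R, Measurable fun ω =>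
      (if (t < X i ω ∧ m ≤ (Sf ω).card) then (1:ℝ≥0∞) else 0) := by
    intro i
    have hNm : Measurable fun ω => (Sf ω).card := by
      have : (fun ω => (Sf ω).card) = fun ω => ∑ j : Fin R, if t < X j ω then 1 else 0 := by
        funext ω
        rw [hSf]
        exact Finset.card_filter _ _
      rw [this]
      exact Finset.measurable_sum _ fun j _ =>
        Measurable.ite (measurableSet_lt measurable_const (hmeas j)) measurable_const
          measurable_const
    refine Measurable.ite ?_ measurable_const measurable_const
    exact (measurableSet_lt measurable_const (hmeas i)).inter
      (measurableSet_le measurable_const hNm)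
  rw [← lintegral_finset_sum _ (fun i _ => hmeas_i i)]
  rw [lintegral_congr hsum]
  have hdecomp : ∀ ω, (if m ≤ (Sf ω).card then ((Sf ω).card : ℝ≥0∞) else 0)
      = ∑ S : Finset (Fin R), Set.indicator {ω' | Sf ω' = S}
          (fun _ => if m ≤ S.card then (S.card:ℝ≥0∞) else 0) ω := by
    intro ω
    rw [Finset.sum_eq_single (Sf ω)]
    · exact (Set.indicator_of_mem (show ω ∈ {ω' | Sf ω' = Sf ω} from rfl)
        (fun _ => if m ≤ (Sf ω).card then ((Sf ω).card : ℝ≥0∞) else 0)).symm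
    · intro S _ hS
      have hnot : ω ∉ {ω' | Sf ω' = S} := fun h => hS (Eq.symm h)
      exact Set.indicator_of_notMem hnot _
    · intro h
      exact absurd (Finset.mem_univ _) h
  rw [lintegral_congr hdecomp,
    lintegral_finset_sum _ (fun S _ => Measurable.indicator measurable_const (hEmeas S))]
  have heval2 : ∀ S : Finset (Fin R),
      ∫⁻ ω, Set.indicator {ω' | Sf ω' = S}
          (fun _ => if m ≤ S.card then (S.card:ℝ≥0∞) else 0) ω ∂μ
        = (if m ≤ S.card then (S.card:ℝ≥0∞) else 0) * (P ^ S.card * Qv ^ (R - S.card)) := by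
    intro S
    rw [lintegral_indicator (hEmeas S), setLIntegral_const, hEval S]
  rw [Finset.sum_congr rfl (fun S _ => heval2 S)]
  -- group by cardinality
  rw [← Finset.powerset_univ, Finset.sum_powerset]
  rw [Finset.card_univ, Fintype.card_fin]
  refine Finset.sum_congr rfl fun k hk => ?_
  have hcongr : ∀ S ∈ Finset.powersetCard k (univ : Finset (Fin R)),
      (if m ≤ S.card then (S.card:ℝ≥0∞) else 0) * (P ^ S.card * Qv ^ (R - S.card))
        = (if m ≤ k then (k:ℝ≥0∞) else 0) * (P ^ k * Qv ^ (R - k)) := by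
    intro S hS
    rw [(Finset.mem_powersetCard.mp hS).2]
  rw [Finset.sum_congr rfl hcongr, Finset.sum_const, Finset.card_powersetCard,
    Finset.card_univ, Fintype.card_fin, nsmul_eq_mul]
  ring

end Aux

open scoped ENNReal NNReal

/-- Unbiasedness of the TLOSF (paper equations (5)–(6)): for `R` i.i.d. exponential
random variables with mean `λ`, the weighted sum of the order statistics up to the
threshold rank `r₀`, with weights `w_r = 1/r₀` for `r < r₀` and
`w_{r₀} = (R − r₀ + 1)/r₀`, has expectation `λ`.  (The index `r : Fin r₀` represents
the rank `r + 1`.) -/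
theorem tlosf_unbiased
    {Ω : Type*} [MeasurableSpace Ω] (μ : Measure Ω) [IsProbabilityMeasure μ]
    {R : ℕ} (hR : 1 ≤ R) (lam : ℝ) (hlam : 0 < lam) (X : Fin R → Ω → ℝ)
    (hmeas : ∀ i, Measurable (X i))
    (hindep : iIndepFun X μ)
    (hdist : ∀ i, Measure.map (X i) μ = expMeasure (1 / lam))
    (r₀ : ℕ) (hr1 : 1 ≤ r₀) (hrR : r₀ ≤ R) :
    ∫ ω, ∑ r : Fin r₀,
        (if (r : ℕ) + 1 < r₀ then (1 : ℝ) / r₀ else ((R : ℝ) - r₀ + 1) / r₀) *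
          orderStat (fun i => X i ω) (Fin.castLE hrR r) ∂μ = lam := by
  classical
  have hr0pos : (0:ℝ) < r₀ := by exact_mod_cast hr1
  set m : ℕ := R - r₀ + 1 with hmdef
  set Q : Ω → ℝ := fun ω => orderStat (fun i => X i ω) ⟨r₀ - 1, by omega⟩ with hQdef
  set F : Ω → ℝ := fun ω => (1/(r₀:ℝ)) * ∑ i : Fin R, min (X i ω) (Q ω) with hFdef
  -- the count function
  set Nt : ℝ → Ω → ℕ := fun t ω => (Finset.univ.filter fun i : Fin R => t < X i ω).card with hNdef
  -- measurability of the count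
  have hNmeas : ∀ t, Measurable fun ω => Nt t ω := by
    intro t
    have : (fun ω => Nt t ω)
        = fun ω => ∑ i : Fin R, (if t < X i ω then 1 else 0) := by
      funext ω
      rw [hNdef]
      exact Finset.card_filter _ _
    rw [this]
    exact Finset.measurable_sum _ fun i _ =>
      Measurable.ite (measurableSet_lt measurable_const (hmeas i)) measurable_const
        measurable_const
  -- threshold characterization
  have hQlt : ∀ ω t, (t < Q ω ↔ m ≤ Nt t ω) := by
    intro ω t
    rw [hQdef, hNdef, hmdef]
    exact orderStat_lt_iff R r₀ hr1 hrR (fun i => X i ω) t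
  have hQmeas : Measurable Q := by
    apply measurable_of_Ioi
    intro t
    have : Q ⁻¹' Set.Ioi t = {ω | m ≤ Nt t ω} := by
      ext ω
      simp only [Set.mem_preimage, Set.mem_Ioi, Set.mem_setOf_eq]
      exact hQlt ω t
    rw [this]
    exact measurableSet_le measurable_const (hNmeas t)
  have hFmeas : Measurable F := by
    apply Measurable.const_mul
    exact Finset.measurable_sum _ fun i _ => (hmeas i).min hQmeas
  -- almost-sure nonnegativity
  have hae : ∀ᵐ ω ∂μ, ∀ i, 0 ≤ X i ω := by
    rw [MeasureTheory.ae_all_iff]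
    intro i
    have h0 : μ (X i ⁻¹' Set.Iio 0) = 0 := by
      rw [← Measure.map_apply (hmeas i) measurableSet_Iio, hdist i, expMeasure_Iio_zero_s12 hlam]
    rw [Filter.eventually_iff]
    rw [MeasureTheory.mem_ae_iff]
    have : {ω | 0 ≤ X i ω}ᶜ = X i ⁻¹' Set.Iio 0 := by
      ext ω; simp [not_le]
    rw [this]
    exact h0
  have hQnn : ∀ ω, (∀ i, 0 ≤ X i ω) → 0 ≤ Q ω := fun ω h => h _
  have hFnn : 0 ≤ᵐ[μ] F := by
    filter_upwards [hae] with ω hω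
    have : 0 ≤ ∑ i : Fin R, min (X i ω) (Q ω) :=
      Finset.sum_nonneg fun i _ => le_min (hω i) (hQnn ω hω)
    rw [hFdef]
    positivity
  -- rewrite the integrand
  have hpt : (fun ω => ∑ r : Fin r₀,
        (if (r : ℕ) + 1 < r₀ then (1 : ℝ) / r₀ else ((R : ℝ) - r₀ + 1) / r₀) *
          orderStat (fun i => X i ω) (Fin.castLE hrR r)) = F := by
    funext ω
    exact tlosf_sum_eq R r₀ hr1 hrR (fun i => X i ω)
  rw [hpt, integral_eq_lintegral_of_nonneg_ae hFnn hFmeas.aestronglyMeasurable]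
  -- the main lintegral computation
  have hmain : ∫⁻ ω, ENNReal.ofReal (F ω) ∂μ = ENNReal.ofReal lam := by
    set f : Fin R → Ω → ℝ → ℝ≥0∞ := fun i ω t =>
      if (t < X i ω ∧ m ≤ Nt t ω) then 1 else 0 with hfdef
    have hfmeas : ∀ i, Measurable (fun p : Ω × ℝ => f i p.1 p.2) := by
      intro i
      have hNm : Measurable fun p : Ω × ℝ => Nt p.2 p.1 := by
        have hrw : (fun p : Ω × ℝ => Nt p.2 p.1)
            = fun p => ∑ j : Fin R, if p.2 < X j p.1 then 1 else 0 := by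
          funext p
          rw [hNdef]
          exact Finset.card_filter _ _
        rw [hrw]
        exact Finset.measurable_sum _ fun j _ =>
          Measurable.ite (measurableSet_lt measurable_snd ((hmeas j).comp measurable_fst))
            measurable_const measurable_const
      refine Measurable.ite ?_ measurable_const measurable_const
      exact (measurableSet_lt measurable_snd ((hmeas i).comp measurable_fst)).inter
        (measurableSet_le measurable_const hNm)
    have B2 : ∀ (i : Fin R) (ω : Ω), ∫⁻ t in Set.Ioi (0:ℝ), f i ω t
        = ENNReal.ofReal (min (X i ω) (Q ω)) := by
      intro i ω
      have hiff : ∀ t : ℝ, (t < X i ω ∧ m ≤ Nt t ω) ↔ t ∈ Set.Iio (min (X i ω) (Q ω)) := by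
        intro t
        rw [Set.mem_Iio, lt_min_iff, hQlt ω t]
      have hfi : (fun t => f i ω t)
          = Set.indicator (Set.Iio (min (X i ω) (Q ω))) (fun _ => (1:ℝ≥0∞)) := by
        funext t
        rw [hfdef]
        simp only []
        rw [Set.indicator_apply]
        exact if_congr (hiff t) rfl rfl
      rw [hfi, lintegral_indicator measurableSet_Iio, setLIntegral_const,
        Measure.restrict_apply measurableSet_Iio, Set.Iio_inter_Ioi, Real.volume_Ioo, one_mul,
        sub_zero]
    calc ∫⁻ ω, ENNReal.ofReal (F ω) ∂μ
        = ∫⁻ ω, ENNReal.ofReal (1/(r₀:ℝ))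
            * ∑ i : Fin R, ENNReal.ofReal (min (X i ω) (Q ω)) ∂μ := by
          apply lintegral_congr_ae
          filter_upwards [hae] with ω hω
          rw [hFdef]
          simp only []
          rw [ENNReal.ofReal_mul (by positivity),
            ENNReal.ofReal_sum_of_nonneg (fun i _ => le_min (hω i) (hQnn ω hω))]
      _ = ENNReal.ofReal (1/(r₀:ℝ))
            * ∑ i : Fin R, ∫⁻ ω, ENNReal.ofReal (min (X i ω) (Q ω)) ∂μ := by
          rw [lintegral_const_mul' _ _ ENNReal.ofReal_ne_top,
            lintegral_finset_sum _ (fun i _ => ((hmeas i).min hQmeas).ennreal_ofReal)]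
      _ = ENNReal.ofReal (1/(r₀:ℝ))
            * ∑ i : Fin R, ∫⁻ t in Set.Ioi (0:ℝ), ∫⁻ ω, f i ω t ∂μ := by
          congr 1
          refine Finset.sum_congr rfl fun i _ => ?_
          rw [← lintegral_lintegral_swap (hfmeas i).aemeasurable]
          exact lintegral_congr fun ω => (B2 i ω).symm
      _ = ENNReal.ofReal (1/(r₀:ℝ))
            * ∫⁻ t in Set.Ioi (0:ℝ), ∑ i : Fin R, ∫⁻ ω, f i ω t ∂μ := by
          congr 1
          refine (lintegral_finset_sum _ (fun i _ => ?_)).symm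
          exact Measurable.lintegral_prod_left
            (f := fun ω t => f i ω t) (hfmeas i)
      _ = ENNReal.ofReal (1/(r₀:ℝ))
            * ∫⁻ t in Set.Ioi (0:ℝ), ∑ k ∈ Finset.range (R+1),
                (if m ≤ k then (k:ℝ≥0∞) else 0)
                  * ((R.choose k : ℝ≥0∞) * (ENNReal.ofReal (pfun lam t))^k
                    * (ENNReal.ofReal (1 - pfun lam t))^(R-k)) := by
          congr 1
          refine setLIntegral_congr_fun measurableSet_Ioi
            (fun t ht => ?_)
          have hPv : ∀ i, μ (X i ⁻¹' Set.Ioi t) = ENNReal.ofReal (pfun lam t) := fun i => by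
            rw [← Measure.map_apply (hmeas i) measurableSet_Ioi, hdist i,
              expMeasure_Ioi_s12 hlam (le_of_lt ht)]
          have hQv : ∀ i, μ (X i ⁻¹' Set.Iic t) = ENNReal.ofReal (1 - pfun lam t) := fun i => by
            rw [← Measure.map_apply (hmeas i) measurableSet_Iic, hdist i,
              expMeasure_Iic_s12 hlam (le_of_lt ht)]
          exact count_expectation μ X hmeas hindep m hPv hQv
      _ = ENNReal.ofReal (1/(r₀:ℝ)) * ∑ k ∈ Finset.range (R+1),
            (if m ≤ k then ENNReal.ofReal lam else 0) := by
          congr 1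
          have hpm : Measurable fun t : ℝ => ENNReal.ofReal (pfun lam t) :=
            (Real.continuous_exp.comp ((continuous_id.div_const lam).neg)).measurable.ennreal_ofReal
          have hqm : Measurable fun t : ℝ => ENNReal.ofReal (1 - pfun lam t) :=
            ((continuous_const.sub
              (Real.continuous_exp.comp ((continuous_id.div_const lam).neg))).measurable).ennreal_ofReal
          rw [lintegral_finset_sum _ (fun k _ => by
            exact Measurable.const_mul
              (((measurable_const.mul (hpm.pow_const k)).mul (hqm.pow_const (R-k)))) _)]
          refine Finset.sum_congr rfl fun k hk => ?_
          by_cases hmk : m ≤ k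
          · simp only [hmk, if_true]
            have hk1 : 1 ≤ k := le_trans (by omega) hmk
            have hkR : k ≤ R := by
              rw [Finset.mem_range] at hk
              omega
            exact lint_term hlam R k hk1 hkR
          · simp [hmk]
      _ = ENNReal.ofReal lam := by
          rw [Finset.sum_ite, Finset.sum_const, Finset.sum_const_zero, add_zero]
          have hcard : ((Finset.range (R+1)).filter (fun k => m ≤ k)).card = r₀ := by
            have hico : (Finset.range (R+1)).filter (fun k => m ≤ k) = Finset.Ico m (R+1) := by
              ext k
              simp only [Finset.mem_filter, Finset.mem_range, Finset.mem_Ico]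
              omega
            rw [hico, Nat.card_Ico]
            omega
          rw [hcard, nsmul_eq_mul]
          rw [← ENNReal.ofReal_natCast r₀, ← ENNReal.ofReal_mul (by positivity),
            ← ENNReal.ofReal_mul (by positivity)]
          congr 1
          have : (r₀:ℝ) ≠ 0 := ne_of_gt hr0pos
          field_simp
  rw [hmain, ENNReal.toReal_ofReal hlam.le]
end
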